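/- Let ℓ(x₁,x₂) = ax₁ + bx₂ + c be an affine functional on ℝ² which is zero on the points vᵢ (i ∈ I⁰), negative on vⱼ (j ∈ I⁻), and positive on vₖ (k ∈ I⁺), where I⁰ ∪ I⁻ ∪ I⁺ = {1,...,n} is a partition. Define the linear functional l̄(x₁,x₂,y₁,...,yₙ) = ax₁ + bx₂ + c·t + Σⱼ αⱼyⱼ (in homogenized form, or affine form ℓ(x₁,x₂) + Σⱼ αⱼyⱼ) with αⱼ = 0 for j ∈ I⁰, αⱼ = −ℓ(x₁ʲ,x₂ʲ) for j ∈ I⁻, and αⱼ = −½ℓ(x₁ʲ,x₂ʲ) for j ∈ I⁺. Then l̄ vanishes exactly on the points {v̄ⱼ : j ∈ I⁻} ∪ {v̄ᵢ, v̄̄ᵢ : i ∈ I⁰} ∪ {v̄̄ₖ : k ∈ I⁺} of the Lawrence lifting, and is strictly positive on all other points of the Lawrence lifting. -/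
import Mathlib


/-- Given an affine functional ℓ on ℝ² vanishing on the points indexed by I⁰,
negative on those indexed by I⁻ and positive on those indexed by I⁺, the lifted
functional l̄(x,y) = ℓ(x) + Σⱼ αⱼ yⱼ with αⱼ = 0, −ℓ(xⱼ), −½ℓ(xⱼ) for
j ∈ I⁰, I⁻, I⁺ respectively vanishes exactly on
{v̄ⱼ : j ∈ I⁻} ∪ {v̄ᵢ, v̄̄ᵢ : i ∈ I⁰} ∪ {v̄̄ₖ : k ∈ I⁺} and is strictly positive
on the remaining points of the Lawrence lifting. -/
theorem lawrence_facet_functional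
    (n : ℕ) (x : Fin n → ℝ × ℝ) (a b c : ℝ)
    (ℓ : ℝ × ℝ → ℝ) (hℓ : ∀ p, ℓ p = a * p.1 + b * p.2 + c)
    (I0 Im Ip : Finset (Fin n))
    (hpart : ∀ j, (j ∈ I0 ∧ j ∉ Im ∧ j ∉ Ip) ∨ (j ∉ I0 ∧ j ∈ Im ∧ j ∉ Ip) ∨
      (j ∉ I0 ∧ j ∉ Im ∧ j ∈ Ip))
    (h0 : ∀ j ∈ I0, ℓ (x j) = 0)
    (hm : ∀ j ∈ Im, ℓ (x j) < 0)
    (hp : ∀ j ∈ Ip, ℓ (x j) > 0)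
    (α : Fin n → ℝ)
    (hα : ∀ j, α j = if j ∈ I0 then 0
      else if j ∈ Im then -ℓ (x j) else -(ℓ (x j)) / 2)
    (vbar vbarbar : Fin n → (ℝ × ℝ) × (Fin n → ℝ))
    (hvbar : ∀ j, vbar j = (x j, Pi.single j 1))
    (hvbarbar : ∀ j, vbarbar j = (x j, Pi.single j 2))
    (lbar : (ℝ × ℝ) × (Fin n → ℝ) → ℝ)
    (hlbar : ∀ p, lbar p = ℓ p.1 + ∑ j, α j * p.2 j) :
    (∀ j ∈ I0, lbar (vbar j) = 0 ∧ lbar (vbarbar j) = 0) ∧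
    (∀ j ∈ Im, lbar (vbar j) = 0 ∧ 0 < lbar (vbarbar j)) ∧
    (∀ j ∈ Ip, 0 < lbar (vbar j) ∧ lbar (vbarbar j) = 0) := by
  have key : ∀ (j : Fin n) (t : ℝ), lbar (x j, Pi.single j t) = ℓ (x j) + α j * t := by
    intro j t
    rw [hlbar]
    simp only
    congr 1
    rw [Finset.sum_eq_single j]
    · simp
    · intro i _ hi; simp [Pi.single_apply, hi]
    · simp
  refine ⟨?_, ?_, ?_⟩
  · intro j hj
    have h := h0 j hj
    constructor
    · rw [hvbar j, key, hα j]; simp [hj, h]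
    · rw [hvbarbar j, key, hα j]; simp [hj, h]
  · intro j hj
    have h := hm j hj
    obtain h0' : j ∉ I0 := by rcases hpart j with ⟨_,h2,_⟩|⟨h1,_,_⟩|⟨_,h2,_⟩ <;> first | exact h1 | exact absurd hj h2
    constructor
    · rw [hvbar j, key, hα j]; simp [h0', hj]
    · rw [hvbarbar j, key, hα j]; simp [h0', hj]; linarith
  · intro j hj
    have h := hp j hj
    have h0' : j ∉ I0 := by rcases hpart j with ⟨_,_,h3⟩|⟨_,_,h3⟩|⟨h1,_,_⟩ <;> first | exact h1 | exact absurd hj h3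
    have hm' : j ∉ Im := by rcases hpart j with ⟨_,h2,_⟩|⟨_,_,h3⟩|⟨_,h2,_⟩ <;> first | exact h2 | exact absurd hj h3
    constructor
    · rw [hvbar j, key, hα j]; simp only [h0', hm', if_false]; linarith
    · rw [hvbarbar j, key, hα j]; simp only [h0', hm', if_false]; ring
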